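/- For the problem min_u (c/2)‖u‖² - (1/2)‖Ku‖² with K = (1,1)ᵀ : ℝ → ℝ², c > 2, apply the primal-dual algorithm with F(g) = -(1/2)‖g‖₂² on ℝ², θ = 0, starting from u⁰ = 0, q⁰ = (-1, 1). Then the iterates satisfy uⁿ = 0 for all n, gⁿ⁺¹ = (σ-1)⁻¹qⁿ and qⁿ⁺¹ = -gⁿ⁺¹, so gⁿ⁺¹ = (-1)ⁿ(σ-1)⁻⁽ⁿ⁺¹⁾q⁰; in particular for 1 < σ < 2 the primal iterates uⁿ converge (are identically 0) while ‖gⁿ‖ → ∞. -/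

import Mathlib

open Filter Topology

lemma quad_min {E : Type*} [NormedAddCommGroup E] [InnerProductSpace ℝ E]
    (α : ℝ) (hα : 0 < α) (b x : E)
    (h : α/2*‖x‖^2 - (inner ℝ x b : ℝ) ≤ α/2*‖α⁻¹ • b‖^2 - (inner ℝ (α⁻¹ • b) b : ℝ)) :
    x = α⁻¹ • b := by
  have e1 : ‖x - α⁻¹ • b‖^2 = ‖x‖^2 - 2 * (inner ℝ x (α⁻¹ • b) : ℝ) + ‖α⁻¹ • b‖^2 :=
    norm_sub_sq_real x _
  have e2 : (inner ℝ x (α⁻¹ • b) : ℝ) = α⁻¹ * (inner ℝ x b : ℝ) := real_inner_smul_right x b _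
  have e3 : (inner ℝ (α⁻¹ • b) b : ℝ) = α⁻¹ * (inner ℝ b b : ℝ) := real_inner_smul_left b b _
  have e4 : ‖α⁻¹ • b‖^2 = α⁻¹^2 * ‖b‖^2 := by
    rw [norm_smul, mul_pow, Real.norm_eq_abs, abs_inv, abs_of_pos hα]
  have e5 : (inner ℝ b b : ℝ) = ‖b‖^2 := real_inner_self_eq_norm_sq b
  have key0 : α/2 * ‖x - α⁻¹ • b‖^2 =
      (α/2*‖x‖^2 - (inner ℝ x b : ℝ)) - (α/2*‖α⁻¹ • b‖^2 - (inner ℝ (α⁻¹ • b) b : ℝ)) := by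
    rw [e1, e2, e3, e4, e5]; field_simp; ring
  have key : α/2 * ‖x - α⁻¹ • b‖^2 ≤ 0 := by linarith
  have h0 : ‖x - α⁻¹ • b‖^2 = 0 := by nlinarith [sq_nonneg ‖x - α⁻¹ • b‖]
  have h1 : ‖x - α⁻¹ • b‖ = 0 := by
    nlinarith [norm_nonneg (x - α⁻¹ • b)]
  exact sub_eq_zero.mp (norm_eq_zero.mp h1)

/-- Example where the primal iterates converge but the `g`-iterates diverge: for
`min_u (c/2)u² - (1/2)‖Ku‖²` with `K = (1,1)ᵀ`, `c > 2`, `F(g) = -(1/2)‖g‖²`, `θ = 0`,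
`u⁰ = 0`, `q⁰ = (-1,1)`, the iterates satisfy `uⁿ = 0`, `gⁿ⁺¹ = (σ-1)⁻¹qⁿ`,
`qⁿ⁺¹ = -gⁿ⁺¹`, hence `gⁿ⁺¹ = (-1)ⁿ(σ-1)^{-(n+1)}q⁰`; for `1 < σ < 2` the `uⁿ`
are identically `0` while `‖gⁿ‖ → ∞`. -/
theorem pdhg_u_converges_g_diverges
    (σ τ c : ℝ) (hσ1 : 1 < σ) (hτ : 0 < τ) (hc : 2 < c)
    (K : ℝ →L[ℝ] EuclideanSpace ℝ (Fin 2))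
    (hK : ∀ x : ℝ, K x = (WithLp.equiv 2 (Fin 2 → ℝ)).symm ![x, x])
    (u : ℕ → ℝ) (g q : ℕ → EuclideanSpace ℝ (Fin 2))
    (hu0 : u 0 = 0) (hq0 : q 0 = (WithLp.equiv 2 (Fin 2 → ℝ)).symm ![-1, 1])
    (hg : ∀ n, ∀ g' : EuclideanSpace ℝ (Fin 2),
      σ / 2 * ‖g (n + 1) - K (u n)‖ ^ 2 - (inner ℝ (g (n + 1)) (q n) : ℝ)
          + (-(1 / 2) * ‖g (n + 1)‖ ^ 2) ≤
        σ / 2 * ‖g' - K (u n)‖ ^ 2 - (inner ℝ g' (q n) : ℝ) + (-(1 / 2) * ‖g'‖ ^ 2))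
    (hq : ∀ n, q (n + 1) = q n + σ • (K (u n) - g (n + 1)))
    (hu : ∀ n, ∀ u' : ℝ,
      1 / (2 * τ) * (u (n + 1) - u n) ^ 2 + (inner ℝ (K (u (n + 1))) (q (n + 1)) : ℝ)
          + c / 2 * (u (n + 1)) ^ 2 ≤
        1 / (2 * τ) * (u' - u n) ^ 2 + (inner ℝ (K u') (q (n + 1)) : ℝ) + c / 2 * u' ^ 2) :
    (∀ n, u n = 0) ∧
    (∀ n, g (n + 1) = (σ - 1)⁻¹ • q n) ∧
    (∀ n, q (n + 1) = -g (n + 1)) ∧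
    (∀ n : ℕ, g (n + 1) = ((-1 : ℝ) ^ n * (σ - 1) ^ (-(n + 1 : ℤ))) • q 0) ∧
    (σ < 2 → Filter.Tendsto (fun n => ‖g n‖) Filter.atTop Filter.atTop) := by
  have hσ0 : 0 < σ - 1 := by linarith
  have hσne : σ - 1 ≠ 0 := hσ0.ne'
  -- inner (K 1) (q 0) = 0
  have hKq0 : (inner ℝ (K 1) (q 0) : ℝ) = 0 := by
    rw [hK 1, hq0]
    simp [PiLp.inner_apply, Fin.sum_univ_two, WithLp.equiv_symm_apply]
  -- g-step: if u n = 0 then g (n+1) = (σ-1)⁻¹ • q n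
  have gstep : ∀ n, u n = 0 → g (n + 1) = (σ - 1)⁻¹ • q n := by
    intro n hun
    have hgn := hg n ((σ - 1)⁻¹ • q n)
    rw [hun, map_zero] at hgn
    simp only [sub_zero] at hgn
    apply quad_min (σ - 1) hσ0 (q n) (g (n + 1))
    linarith [hgn]
  -- q-step coefficient
  have hcoef : (1 : ℝ) - σ * (σ - 1)⁻¹ = -(σ - 1)⁻¹ := by field_simp; ring
  have qstep : ∀ n, u n = 0 → q (n + 1) = (-(σ - 1)⁻¹) • q n := by
    intro n hun
    rw [hq n, hun, map_zero, gstep n hun, zero_sub, smul_neg, smul_smul, ← hcoef, sub_smul,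
      one_smul]
    abel
  -- u-step
  have ustep : ∀ n, u n = 0 → (inner ℝ (K 1) (q (n + 1)) : ℝ) = 0 → u (n + 1) = 0 := by
    intro n hun hinn
    have hun0 := hu n 0
    have hKlin : ∀ x : ℝ, (inner ℝ (K x) (q (n + 1)) : ℝ) = x * (inner ℝ (K 1) (q (n + 1)) : ℝ) := by
      intro x
      have : K x = x • K 1 := by rw [← map_smul]; simp [smul_eq_mul]
      rw [this, real_inner_smul_left]
    rw [hun, map_zero, inner_zero_left, hKlin (u (n + 1)), hinn, mul_zero] at hun0
    norm_num at hun0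
    have hτ' : 0 < 1 / (2 * τ) := by positivity
    have h1 : u (n + 1) ^ 2 ≤ 0 := by
      nlinarith [hun0, mul_nonneg (inv_pos.mpr hτ).le (sq_nonneg (u (n + 1))), hc,
        sq_nonneg (u (n + 1))]
    have hsq : (u (n + 1)) ^ 2 = 0 := le_antisymm h1 (sq_nonneg _)
    exact sq_eq_zero_iff.mp hsq
  -- main invariant
  have main : ∀ n, u n = 0 ∧ q n = ((-(σ - 1)⁻¹) ^ n) • q 0 := by
    intro n
    induction n with
    | zero => exact ⟨hu0, by simp⟩
    | succ n ih =>
      obtain ⟨h1, h2⟩ := ih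
      have hq' : q (n + 1) = ((-(σ - 1)⁻¹) ^ (n + 1)) • q 0 := by
        rw [qstep n h1, h2, smul_smul, ← pow_succ']
      refine ⟨ustep n h1 ?_, hq'⟩
      rw [hq', real_inner_smul_right, hKq0, mul_zero]
  have hmu : ∀ n, u n = 0 := fun n => (main n).1
  have hmg : ∀ n, g (n + 1) = (σ - 1)⁻¹ • q n := fun n => gstep n (hmu n)
  have hmq : ∀ n, q (n + 1) = -g (n + 1) := by
    intro n
    rw [qstep n (hmu n), hmg n, neg_smul]
  have hmg2 : ∀ n : ℕ, g (n + 1) = ((-1 : ℝ) ^ n * (σ - 1) ^ (-(n + 1 : ℤ))) • q 0 := by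
    intro n
    rw [hmg n, (main n).2, smul_smul]
    congr 1
    have hz : (-(n + 1 : ℤ)) = -((n + 1 : ℕ) : ℤ) := by push_cast; ring
    rw [hz, zpow_neg, zpow_natCast, neg_pow, inv_pow, pow_succ]
    field_simp
  refine ⟨hmu, hmg, hmq, hmg2, ?_⟩
  intro hσ2
  have hr : 1 < (σ - 1)⁻¹ := by
    exact (one_lt_inv₀ hσ0).mpr (by linarith)
  have hq0pos : 0 < ‖q 0‖ := by
    rw [norm_pos_iff]
    intro h
    have : (q 0) 0 = -1 := by rw [hq0]; rfl
    rw [h] at this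
    simp at this
  have hnorm : ∀ n : ℕ, ‖g (n + 1)‖ = ((σ - 1)⁻¹) ^ (n + 1) * ‖q 0‖ := by
    intro n
    rw [hmg2 n, norm_smul, Real.norm_eq_abs]
    congr 1
    have hz : (-(n + 1 : ℤ)) = -((n + 1 : ℕ) : ℤ) := by push_cast; ring
    rw [hz, zpow_neg, zpow_natCast, abs_mul, abs_pow, abs_neg, abs_one, one_pow, one_mul,
      abs_inv, abs_pow, abs_of_pos hσ0, inv_pow]
  rw [← Filter.tendsto_add_atTop_iff_nat 1]
  have htend : Tendsto (fun n : ℕ => ((σ - 1)⁻¹) ^ (n + 1) * ‖q 0‖) atTop atTop := by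
    apply Filter.Tendsto.atTop_mul_const hq0pos
    exact (tendsto_pow_atTop_atTop_of_one_lt hr).comp (tendsto_add_atTop_nat 1)
  exact htend.congr (fun n => (hnorm n).symm)
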